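/- Let K be a field of characteristic zero, Γ = (V, E) a simple graph with vertex set V = {1,…,n}, and k ∈ {1,…,n}. Let F_{n,k} = {v_j : j ∈ [n−k]} ∪ T^n_{=3} ⊆ K[x_1,…,x_n] with v_j = Σ_{i=1}^n i^j x_i. For an order ideal O, define its score as the number of degree-two monomials x_u x_v ∈ O with either {u,v} ∈ E or u = v. Then Γ contains a clique of size k if and only if there exists an order ideal O supporting a border basis of ⟨F_{n,k}⟩ whose score equals k(k+1)/2; moreover k(k+1)/2 is the maximum possible score over all such order ideals when Γ has a k-clique. -/

import Mathlib

open MvPolynomial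

/-- Total degree of a monomial given by its exponent vector. -/
def mdeg {n : ℕ} (m : Fin n →₀ ℕ) : ℕ := m.sum fun _ k => k

/-- An order ideal: a finite set of monomials (represented by their exponent
vectors) closed under divisibility (`t' ∣ t` corresponds to `t' ≤ t`). -/
def IsOrderIdeal {n : ℕ} (O : Finset (Fin n →₀ ℕ)) : Prop :=
  ∀ t ∈ O, ∀ t' : Fin n →₀ ℕ, t' ≤ t → t' ∈ O

/-- The `K`-vector subspace of `K[X]` spanned by a set of monomials. -/
noncomputable def monSpan (K : Type*) [Field K] {n : ℕ} (O : Set (Fin n →₀ ℕ)) :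
    Submodule K (MvPolynomial (Fin n) K) :=
  Submodule.span K ((fun m => (monomial m (1 : K))) '' O)

/-- The linear form `v_j = ∑_{i=1}^n i^j x_i`. -/
noncomputable def vlin (K : Type*) [Field K] (n j : ℕ) : MvPolynomial (Fin n) K :=
  ∑ i : Fin n, C ((((i : ℕ) + 1) ^ j : ℕ) : K) * X i

/-- The set `F_{n,k} = {v_j : j ∈ [n-k]} ∪ T^n_{=3}`. -/
noncomputable def Fnk (K : Type*) [Field K] (n k : ℕ) : Set (MvPolynomial (Fin n) K) :=
  (Set.range fun j : Fin (n - k) => vlin K n ((j : ℕ) + 1)) ∪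
    ((fun m => monomial m (1 : K)) '' {m : Fin n →₀ ℕ | mdeg m = 3})

/-- The score of an order ideal `O` with respect to a graph `Γ`: the number of
degree-two monomials `x_u x_v ∈ O` with `{u,v} ∈ E` or `u = v`. -/
noncomputable def score {n : ℕ} (Γ : SimpleGraph (Fin n)) (O : Finset (Fin n →₀ ℕ)) : ℕ :=
  Set.ncard {m : Fin n →₀ ℕ | m ∈ O ∧ mdeg m = 2 ∧
    ∃ u v : Fin n, m = Finsupp.single u 1 + Finsupp.single v 1 ∧ (Γ.Adj u v ∨ u = v)}

open Matrix

set_option linter.unusedSectionVars false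
set_option maxHeartbeats 1000000

namespace BB

variable {n : ℕ}

lemma mdeg_add (a b : Fin n →₀ ℕ) : mdeg (a + b) = mdeg a + mdeg b :=
  Finsupp.sum_add_index' (fun _ => rfl) (fun _ _ _ => rfl)

lemma mdeg_single (u : Fin n) (e : ℕ) : mdeg (Finsupp.single u e) = e :=
  Finsupp.sum_single_index rfl

@[simp] lemma mdeg_zero : mdeg (0 : Fin n →₀ ℕ) = 0 := rfl

lemma apply_le_mdeg (m : Fin n →₀ ℕ) (i : Fin n) : m i ≤ mdeg m := by
  by_cases h : i ∈ m.support
  · exact Finset.single_le_sum (f := fun j => m j) (fun _ _ => Nat.zero_le _) h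
  · simp [Finsupp.notMem_support_iff.mp h]

lemma mdeg_eq_zero {m : Fin n →₀ ℕ} (h : mdeg m = 0) : m = 0 := by
  ext i
  exact Nat.le_zero.mp (h ▸ apply_le_mdeg m i)

lemma mdeg_mono {a b : Fin n →₀ ℕ} (h : a ≤ b) : mdeg a ≤ mdeg b := by
  obtain ⟨c, rfl⟩ := le_iff_exists_add.mp h
  simp [mdeg_add]

lemma eq_of_le_of_mdeg_le {a b : Fin n →₀ ℕ} (h : a ≤ b) (h2 : mdeg b ≤ mdeg a) : a = b := by
  obtain ⟨c, rfl⟩ := le_iff_exists_add.mp h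
  rw [mdeg_add] at h2
  have : mdeg c = 0 := by omega
  rw [mdeg_eq_zero this, add_zero]

lemma exists_single_add {m : Fin n →₀ ℕ} {d : ℕ} (h : mdeg m = d + 1) :
    ∃ u m', m = Finsupp.single u 1 + m' ∧ mdeg m' = d := by
  have hm : m ≠ 0 := by intro h0; rw [h0] at h; simp at h
  obtain ⟨u, hu⟩ := Finsupp.ne_iff.mp hm
  simp only [Finsupp.coe_zero, Pi.zero_apply] at hu
  have hle : Finsupp.single u 1 ≤ m := Finsupp.single_le_iff.mpr (by omega)
  obtain ⟨c, rfl⟩ := le_iff_exists_add.mp hle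
  refine ⟨u, c, rfl, ?_⟩
  rw [mdeg_add, mdeg_single] at h; omega

lemma mdeg_eq_one {m : Fin n →₀ ℕ} (h : mdeg m = 1) : ∃ u, m = Finsupp.single u 1 := by
  obtain ⟨u, m', rfl, h0⟩ := exists_single_add h
  exact ⟨u, by rw [mdeg_eq_zero h0, add_zero]⟩

lemma mdeg_eq_two {m : Fin n →₀ ℕ} (h : mdeg m = 2) :
    ∃ u v, m = Finsupp.single u 1 + Finsupp.single v 1 := by
  obtain ⟨u, m', rfl, h1⟩ := exists_single_add h
  obtain ⟨v, rfl⟩ := mdeg_eq_one h1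
  exact ⟨u, v, rfl⟩

lemma mdeg_eq_three {m : Fin n →₀ ℕ} (h : mdeg m = 3) :
    ∃ u v w, m = Finsupp.single u 1 + (Finsupp.single v 1 + Finsupp.single w 1) := by
  obtain ⟨u, m', rfl, h1⟩ := exists_single_add h
  obtain ⟨v, w, rfl⟩ := mdeg_eq_two h1
  exact ⟨u, v, w, rfl⟩

lemma exists_split {m : Fin n →₀ ℕ} (h : 3 ≤ mdeg m) :
    ∃ a b : Fin n →₀ ℕ, m = a + b ∧ mdeg a = 3 := by
  obtain ⟨d, hd⟩ : ∃ d, mdeg m = d + 3 := ⟨mdeg m - 3, by omega⟩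
  clear h
  induction d generalizing m with
  | zero => exact ⟨m, 0, by simp, by simpa using hd⟩
  | succ d ih =>
    obtain ⟨u, m', rfl, h1⟩ := exists_single_add (m := m) (d := d + 3) (by omega)
    obtain ⟨a, b, rfl, ha⟩ := ih h1
    exact ⟨a, Finsupp.single u 1 + b, by abel, ha⟩

lemma pair_eq {u v u' v' : Fin n}
    (h : Finsupp.single u 1 + Finsupp.single v 1 = Finsupp.single u' 1 + Finsupp.single v' 1) :
    (u = u' ∧ v = v') ∨ (u = v' ∧ v = u') := by
  have hval := DFunLike.congr_fun h u'
  simp only [Finsupp.add_apply, Finsupp.single_apply] at hval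
  by_cases h1 : u = u'
  · subst h1
    have : Finsupp.single v 1 = Finsupp.single v' 1 := add_left_cancel h
    exact Or.inl ⟨rfl, (Finsupp.single_left_inj one_ne_zero).mp this⟩
  · have h2 : v = u' := by
      by_contra h2
      rw [if_neg h1, if_neg h2] at hval
      by_cases h3 : v' = u' <;> simp [h3] at hval
    subst h2
    rw [add_comm (Finsupp.single v 1) (Finsupp.single v' 1)] at h
    have hs : Finsupp.single u 1 = Finsupp.single v' 1 := add_right_cancel h
    exact Or.inr ⟨(Finsupp.single_left_inj one_ne_zero).mp hs, rfl⟩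

section Lin

variable {K : Type*} [Field K] [CharZero K] {n : ℕ}

variable (K) in
noncomputable def phi : MvPolynomial (Fin n) K →ₗ[K] (Fin n → K) :=
  LinearMap.pi fun i => lcoeff K (Finsupp.single i 1)

@[simp] lemma phi_apply (p : MvPolynomial (Fin n) K) (i : Fin n) :
    phi K p i = coeff (Finsupp.single i 1) p := rfl

lemma phi_X (u : Fin n) : phi K (X u) = Pi.single u (1 : K) := by
  funext i
  rw [phi_apply, coeff_X', Pi.single_apply]
  rcases eq_or_ne i u with rfl | h
  · simp
  · simp [h, Ne.symm h, Finsupp.single_eq_single_iff]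

lemma phi_vlin (j : ℕ) :
    phi K (vlin K n j) = fun i : Fin n => ((((i : ℕ) + 1) ^ j : ℕ) : K) := by
  funext i
  rw [phi_apply, vlin, coeff_sum]
  simp only [coeff_C_mul, coeff_X']
  rw [Finset.sum_eq_single i] <;> simp +contextual [eq_comm, Finsupp.single_eq_single_iff]

variable (K) in
noncomputable def spanX (n : ℕ) : Submodule K (MvPolynomial (Fin n) K) :=
  Submodule.span K (Set.range (X : Fin n → MvPolynomial (Fin n) K))

lemma X_mem_spanX (i : Fin n) : X i ∈ spanX K n :=
  Submodule.subset_span ⟨i, rfl⟩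

lemma vlin_mem_spanX (j : ℕ) : vlin K n j ∈ spanX K n := by
  rw [vlin]
  refine Submodule.sum_mem _ fun i _ => ?_
  rw [← smul_eq_C_mul]
  exact Submodule.smul_mem _ _ (X_mem_spanX i)

lemma supp_of_mem_spanX {p : MvPolynomial (Fin n) K} (hp : p ∈ spanX K n) :
    ∀ m, coeff m p ≠ 0 → ∃ i, m = Finsupp.single i 1 := by
  refine Submodule.span_induction ?_ ?_ ?_ ?_ hp
  · rintro x ⟨i, rfl⟩ m hm
    rw [coeff_X'] at hm
    refine ⟨i, ?_⟩
    by_contra hc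
    rw [if_neg] at hm
    · exact hm rfl
    · simpa [Finsupp.single_eq_single_iff, eq_comm] using hc
  · simp
  · intro x y hx hy ihx ihy m hm
    rw [coeff_add] at hm
    by_cases h1 : coeff m x = 0
    · exact ihy m (by intro h2; rw [h1, h2] at hm; simp at hm)
    · exact ihx m h1
  · intro a x hx ihx m hm
    rw [coeff_smul] at hm
    exact ihx m fun h2 => hm (by rw [h2, smul_zero])

lemma eq_zero_of_phi {p : MvPolynomial (Fin n) K} (hp : p ∈ spanX K n)
    (h : phi K p = 0) : p = 0 := by
  ext m
  rw [coeff_zero]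
  by_contra hm
  obtain ⟨i, rfl⟩ := supp_of_mem_spanX hp m hm
  have := congrFun h i
  rw [phi_apply] at this
  exact hm (by simpa using this)

lemma disj_spanX_ker : Disjoint (spanX K n) (LinearMap.ker (phi K)) := by
  rw [Submodule.disjoint_def]
  intro x hx hker
  exact eq_zero_of_phi hx (LinearMap.mem_ker.mp hker)

variable (K) in
noncomputable def sigma (n : ℕ) : (Fin n → K) →ₗ[K] MvPolynomial (Fin n) K where
  toFun y := ∑ i, y i • X i
  map_add' y z := by simp [add_smul, Finset.sum_add_distrib]
  map_smul' a y := by simp [smul_smul, Finset.smul_sum]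

lemma sigma_single (u : Fin n) : sigma K n (Pi.single u (1 : K)) = X u := by
  simp only [sigma, LinearMap.coe_mk, AddHom.coe_mk]
  rw [Finset.sum_eq_single u] <;> simp +contextual [Pi.single_apply]

lemma sigma_phi_vlin (j : ℕ) : sigma K n (phi K (vlin K n j)) = vlin K n j := by
  rw [phi_vlin]
  simp only [sigma, LinearMap.coe_mk, AddHom.coe_mk, vlin, smul_eq_C_mul]

lemma rows_indep_aux {m : ℕ} (c : Fin m → K) (hcinj : Function.Injective c)
    (hc0 : ∀ t, c t ≠ 0) :
    LinearIndependent K fun j : Fin m => fun t : Fin m => c t ^ ((j : ℕ) + 1) := by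
  have hMT : (Matrix.of (fun (j t : Fin m) => c t ^ ((j : ℕ) + 1)))ᵀ
      = Matrix.diagonal c * Matrix.vandermonde c := by
    ext t j
    simp [Matrix.vandermonde, Matrix.diagonal_mul, pow_succ']
  have hdet : IsUnit (Matrix.of (fun (j t : Fin m) => c t ^ ((j : ℕ) + 1))).det := by
    rw [← Matrix.det_transpose, hMT, Matrix.det_mul, Matrix.det_diagonal,
      Matrix.det_vandermonde]
    rw [isUnit_iff_ne_zero]
    refine mul_ne_zero (Finset.prod_ne_zero_iff.mpr fun t _ => hc0 t) ?_
    refine Finset.prod_ne_zero_iff.mpr fun i _ => ?_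
    refine Finset.prod_ne_zero_iff.mpr fun j hj => ?_
    refine sub_ne_zero_of_ne fun hh => ?_
    rw [Finset.mem_Ioi] at hj
    exact absurd (hcinj hh) (ne_of_gt hj)
  exact Matrix.linearIndependent_rows_iff_isUnit.mpr
    ((Matrix.isUnit_iff_isUnit_det _).mpr hdet)

lemma rows_indep {m : ℕ} (s : Fin m → Fin n) (hs : Function.Injective s) :
    LinearIndependent K fun j : Fin m =>
      fun t : Fin m => ((((s t : ℕ) + 1) ^ ((j : ℕ) + 1) : ℕ) : K) := by
  have hcinj : Function.Injective fun t => (((s t : ℕ) + 1 : ℕ) : K) := by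
    intro a b hab
    apply hs
    have : ((s a : ℕ) + 1 : ℕ) = ((s b : ℕ) + 1 : ℕ) := Nat.cast_injective hab
    exact Fin.val_injective (by omega)
  have := rows_indep_aux (fun t => (((s t : ℕ) + 1 : ℕ) : K)) hcinj
    (fun t => Nat.cast_ne_zero.mpr (Nat.succ_ne_zero _))
  convert this using 2 with j t
  push_cast
  ring

end Lin

section Main

variable {K : Type*} [Field K] [CharZero K] {n k : ℕ}

variable (K n k) in
noncomputable def Lspan : Submodule K (MvPolynomial (Fin n) K) :=
  Submodule.span K (Set.range fun j : Fin (n - k) => vlin K n ((j : ℕ) + 1))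

variable (K) in
noncomputable def Cspan (C : Finset (Fin n)) : Submodule K (MvPolynomial (Fin n) K) :=
  Submodule.span K (Set.range fun c : {x // x ∈ C} => X (c : Fin n))

lemma Lspan_le_spanX : Lspan K n k ≤ spanX K n :=
  Submodule.span_le.mpr (by rintro x ⟨j, rfl⟩; exact vlin_mem_spanX _)

lemma Cspan_le_spanX {C : Finset (Fin n)} : Cspan K C ≤ spanX K n :=
  Submodule.span_le.mpr (by rintro x ⟨c, rfl⟩; exact X_mem_spanX _)

lemma vI_indep (hkn : k ≤ n) :
    LinearIndependent K fun j : Fin (n - k) => vlin K n ((j : ℕ) + 1) := by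
  set s : Fin (n - k) → Fin n := fun t => ⟨t.1, lt_of_lt_of_le t.2 (Nat.sub_le n k)⟩ with hs
  have hsinj : Function.Injective s := by
    intro a b hab
    have h1 : (s a).1 = (s b).1 := by rw [hab]
    simp only [hs] at h1
    exact Fin.val_injective h1
  apply LinearIndependent.of_comp (LinearMap.funLeft K K s ∘ₗ phi K)
  have hcomp : (⇑(LinearMap.funLeft K K s ∘ₗ phi K) ∘ fun j : Fin (n - k) => vlin K n ((j : ℕ) + 1))
      = fun (j : Fin (n - k)) (t : Fin (n - k)) => ((((s t : ℕ) + 1) ^ ((j : ℕ) + 1) : ℕ) : K) := by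
    funext j t
    simp [LinearMap.funLeft_apply, phi_vlin]
  rw [hcomp]
  exact rows_indep s hsinj

lemma XT_indep (T : Finset (Fin n)) :
    LinearIndependent K fun c : {x // x ∈ T} => (X (c : Fin n) : MvPolynomial (Fin n) K) := by
  have hinj : Function.Injective fun c : {x // x ∈ T} => Finsupp.single (c : Fin n) (1 : ℕ) := by
    intro a b hab
    exact Subtype.ext ((Finsupp.single_left_inj one_ne_zero).mp hab)
  have h2 := ((basisMonomials (Fin n) K).linearIndependent).comp _ hinj
  have hfn : ((⇑(basisMonomials (Fin n) K)) ∘ fun c : {x // x ∈ T} => Finsupp.single (c : Fin n) (1 : ℕ))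
      = fun c : {x // x ∈ T} => (X (c : Fin n) : MvPolynomial (Fin n) K) := by
    funext c
    simp only [coe_basisMonomials]
    rfl
  rwa [hfn] at h2

lemma compl_enum {C : Finset (Fin n)} (hC : C.card = k) :
    ∃ s : Fin (n - k) → Fin n, Function.Injective s ∧ ∀ t, s t ∉ C := by
  have hcard : Cᶜ.card = n - k := by
    rw [Finset.card_compl, hC, Fintype.card_fin]
  refine ⟨fun t => (Cᶜ.equivFin.symm (finCongr hcard.symm t) : Fin n), ?_, ?_⟩
  · intro a b hab
    have := Cᶜ.equivFin.symm.injective (Subtype.ext hab)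
    exact (finCongr hcard.symm).injective this
  · intro t
    exact Finset.mem_compl.mp (Cᶜ.equivFin.symm (finCongr hcard.symm t)).2

lemma disj_LC (hkn : k ≤ n) {C : Finset (Fin n)} (hC : C.card = k) :
    Disjoint (Lspan K n k) (Cspan K C) := by
  rw [Submodule.disjoint_def]
  intro x hxL hxC
  obtain ⟨s, hsinj, hsC⟩ := compl_enum hC
  have hyL : phi K x ∈ Submodule.span K
      (Set.range (⇑(phi K) ∘ fun j : Fin (n - k) => vlin K n ((j : ℕ) + 1))) := by
    have : phi K x ∈ Submodule.map (phi K) (Lspan K n k) := Submodule.mem_map_of_mem hxL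
    rwa [Lspan, Submodule.map_span, ← Set.range_comp] at this
  have hyC : phi K x ∈ Submodule.span K
      (Set.range fun c : {x // x ∈ C} => Pi.single (c : Fin n) (1 : K)) := by
    have : phi K x ∈ Submodule.map (phi K) (Cspan K C) := Submodule.mem_map_of_mem hxC
    rw [Cspan, Submodule.map_span, ← Set.range_comp] at this
    simpa only [Function.comp_def, phi_X] using this
  have hzero : LinearMap.funLeft K K s (phi K x) = 0 := by
    have hle : Submodule.span K
        (Set.range fun c : {x // x ∈ C} => Pi.single (c : Fin n) (1 : K))
        ≤ LinearMap.ker (LinearMap.funLeft K K s) := by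
      rw [Submodule.span_le]
      rintro _ ⟨c, rfl⟩
      rw [SetLike.mem_coe, LinearMap.mem_ker]
      funext t
      rw [LinearMap.funLeft_apply]
      exact Pi.single_eq_of_ne (fun hh => hsC t (by rw [hh]; exact c.2)) 1
    exact LinearMap.mem_ker.mp (hle hyC)
  obtain ⟨b, hb⟩ := (Submodule.mem_span_range_iff_exists_fun K).mp hyL
  have happ : ∑ j, b j • (fun t => ((((s t : ℕ) + 1) ^ ((j : ℕ) + 1) : ℕ) : K)) = 0 := by
    have := congrArg (LinearMap.funLeft K K s) hb
    rw [map_sum] at this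
    rw [hzero] at this
    convert this using 2 with j
    rw [LinearMap.map_smul]
    congr 1
    funext t
    simp [LinearMap.funLeft_apply, phi_vlin]
  have hli := rows_indep (K := K) s hsinj
  rw [Fintype.linearIndependent_iff] at hli
  have hb0 : ∀ j, b j = 0 := hli b happ
  have hphix : phi K x = 0 := by
    rw [← hb]
    simp [hb0]
  exact eq_zero_of_phi (Lspan_le_spanX hxL) hphix

variable (K n k) in
noncomputable def comb (C : Finset (Fin n)) :
    Fin (n - k) ⊕ {x // x ∈ C} → MvPolynomial (Fin n) K :=
  Sum.elim (fun j => vlin K n ((j : ℕ) + 1)) (fun c => X (c : Fin n))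

lemma comb_range_span (C : Finset (Fin n)) :
    Submodule.span K (Set.range (comb K n k C)) = Lspan K n k ⊔ Cspan K C := by
  rw [comb, Set.Sum.elim_range, Submodule.span_union, Lspan, Cspan]

lemma comb_le_spanX (C : Finset (Fin n)) :
    Submodule.span K (Set.range (comb K n k C)) ≤ spanX K n := by
  rw [comb_range_span]
  exact sup_le Lspan_le_spanX Cspan_le_spanX

lemma comb_indep (hkn : k ≤ n) {C : Finset (Fin n)} (hC : C.card = k) :
    LinearIndependent K (comb K n k C) :=
  (vI_indep hkn).sum_type (XT_indep C) (disj_LC hkn hC)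

lemma phi_comb_indep (hkn : k ≤ n) {C : Finset (Fin n)} (hC : C.card = k) :
    LinearIndependent K (⇑(phi K) ∘ comb K n k C) :=
  (comb_indep hkn hC).map (Disjoint.mono_left (comb_le_spanX C) disj_spanX_ker)

lemma span_phi_comb (hkn : k ≤ n) {C : Finset (Fin n)} (hC : C.card = k) :
    Submodule.span K (Set.range (⇑(phi K) ∘ comb K n k C)) = ⊤ := by
  refine (phi_comb_indep hkn hC).span_eq_top_of_card_eq_finrank' ?_
  rw [Module.finrank_fintype_fun_eq_card, Fintype.card_fin]
  simp only [Fintype.card_sum, Fintype.card_fin, Fintype.card_coe, hC]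
  omega

lemma X_mem_sup (hkn : k ≤ n) {C : Finset (Fin n)} (hC : C.card = k) (i : Fin n) :
    X i ∈ Lspan K n k ⊔ Cspan K C := by
  have htop := span_phi_comb (K := K) hkn hC
  have hmem : Pi.single i (1 : K) ∈
      Submodule.span K (Set.range (⇑(phi K) ∘ comb K n k C)) := htop ▸ Submodule.mem_top
  have hx : X i ∈ Submodule.map (sigma K n)
      (Submodule.span K (Set.range (⇑(phi K) ∘ comb K n k C))) :=
    ⟨_, hmem, sigma_single i⟩
  rw [Submodule.map_span, ← Set.range_comp] at hx
  have hrange : (⇑(sigma K n) ∘ (⇑(phi K) ∘ comb K n k C)) = comb K n k C := by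
    funext t
    cases t with
    | inl j => exact sigma_phi_vlin _
    | inr c =>
      show sigma K n (phi K (X (c : Fin n))) = X (c : Fin n)
      rw [phi_X, sigma_single]
  rw [hrange, comb_range_span] at hx
  exact hx

end Main

section Ideals

variable {K : Type*} [Field K] [CharZero K] {n k : ℕ}

variable (K n) in
noncomputable def Jcub : Ideal (MvPolynomial (Fin n) K) :=
  Ideal.span ((fun m => monomial m (1 : K)) '' {m : Fin n →₀ ℕ | mdeg m = 3})

lemma coeff_eq_zero_of_mem_Jcub {p : MvPolynomial (Fin n) K} (hp : p ∈ Jcub K n)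
    {m : Fin n →₀ ℕ} (hm : mdeg m ≤ 2) : coeff m p = 0 := by
  have key : ∀ m' : Fin n →₀ ℕ, mdeg m' ≤ 2 → coeff m' p = 0 := by
    refine Submodule.span_induction ?_ ?_ ?_ ?_ hp
    · rintro x ⟨m0, hm0, rfl⟩ m' hm'
      rw [coeff_monomial, if_neg]
      intro hc
      rw [← hc] at hm'
      rw [Set.mem_setOf_eq] at hm0
      omega
    · simp
    · intro x y hx hy ihx ihy m' hm'
      rw [coeff_add, ihx m' hm', ihy m' hm', add_zero]
    · intro a x hx ihx m' hm'
      rw [smul_eq_mul, coeff_mul]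
      refine Finset.sum_eq_zero fun z hz => ?_
      rw [Finset.HasAntidiagonal.mem_antidiagonal] at hz
      have : mdeg z.2 ≤ 2 := by
        have := mdeg_add z.1 z.2
        rw [hz] at this
        omega
      rw [ihx z.2 this, mul_zero]
  exact key m hm

lemma X_mul_X (u v : Fin n) :
    (X u : MvPolynomial (Fin n) K) * X v
      = monomial (Finsupp.single u 1 + Finsupp.single v 1) 1 := by
  rw [show (X u : MvPolynomial (Fin n) K) = monomial (Finsupp.single u 1) 1 from rfl,
    show (X v : MvPolynomial (Fin n) K) = monomial (Finsupp.single v 1) 1 from rfl,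
    monomial_mul, one_mul]

lemma cube_mem_Jcub {p q r : MvPolynomial (Fin n) K} (hp : p ∈ spanX K n)
    (hq : q ∈ spanX K n) (hr : r ∈ spanX K n) : p * q * r ∈ Jcub K n := by
  have h1 : p * q * r ∈ spanX K n * spanX K n * spanX K n :=
    Submodule.mul_mem_mul (Submodule.mul_mem_mul hp hq) hr
  have h2 : spanX K n * spanX K n * spanX K n
      ≤ Submodule.restrictScalars K (Jcub K n) := by
    rw [spanX, Submodule.span_mul_span, Submodule.span_mul_span, Submodule.span_le]
    rintro x hx
    obtain ⟨y, hy, z, hz, rfl⟩ := Set.mem_mul.mp hx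
    obtain ⟨a, ha, b, hb, rfl⟩ := Set.mem_mul.mp hy
    obtain ⟨i, rfl⟩ := ha
    obtain ⟨i', rfl⟩ := hb
    obtain ⟨i'', rfl⟩ := hz
    rw [SetLike.mem_coe, Submodule.restrictScalars_mem]
    have hXX : (X i : MvPolynomial (Fin n) K) * X i' * X i''
        = monomial (Finsupp.single i 1 + Finsupp.single i' 1 + Finsupp.single i'' 1) 1 := by
      rw [X_mul_X, show (X i'' : MvPolynomial (Fin n) K)
        = monomial (Finsupp.single i'' 1) 1 from rfl, monomial_mul, one_mul]
    rw [hXX]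
    refine Ideal.subset_span ⟨_, ?_, rfl⟩
    rw [Set.mem_setOf_eq, mdeg_add, mdeg_add, mdeg_single, mdeg_single, mdeg_single]
  exact h2 h1

end Ideals

section OrderIdeals

variable {K : Type*} [Field K] [CharZero K] {n k : ℕ}

variable (n) in
noncomputable def OC (C : Finset (Fin n)) : Finset (Fin n →₀ ℕ) :=
  insert 0 ((C.image fun c => Finsupp.single c 1) ∪
    (C ×ˢ C).image fun p => Finsupp.single p.1 1 + Finsupp.single p.2 1)

lemma mem_OC {C : Finset (Fin n)} {m : Fin n →₀ ℕ} :
    m ∈ OC n C ↔ m = 0 ∨ (∃ c ∈ C, m = Finsupp.single c 1) ∨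
      (∃ c ∈ C, ∃ d ∈ C, m = Finsupp.single c 1 + Finsupp.single d 1) := by
  simp only [OC, Finset.mem_insert, Finset.mem_union, Finset.mem_image,
    Finset.mem_product, Prod.exists]
  constructor
  · rintro (rfl | ⟨c, hc, rfl⟩ | ⟨c, d, ⟨hc, hd⟩, rfl⟩)
    · exact Or.inl rfl
    · exact Or.inr (Or.inl ⟨c, hc, rfl⟩)
    · exact Or.inr (Or.inr ⟨c, hc, d, hd, rfl⟩)
  · rintro (rfl | ⟨c, hc, rfl⟩ | ⟨c, hc, d, hd, rfl⟩)
    · exact Or.inl rfl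
    · exact Or.inr (Or.inl ⟨c, hc, rfl⟩)
    · exact Or.inr (Or.inr ⟨c, d, ⟨hc, hd⟩, rfl⟩)

lemma mdeg_le_two_of_mem_OC {C : Finset (Fin n)} {m : Fin n →₀ ℕ} (hm : m ∈ OC n C) :
    mdeg m ≤ 2 := by
  rcases mem_OC.mp hm with rfl | ⟨c, _, rfl⟩ | ⟨c, _, d, _, rfl⟩
  · simp
  · rw [mdeg_single]; omega
  · rw [mdeg_add, mdeg_single, mdeg_single]

lemma OC_isOrderIdeal {C : Finset (Fin n)} : IsOrderIdeal (OC n C) := by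
  intro t ht t' hle
  have h2 : mdeg t ≤ 2 := mdeg_le_two_of_mem_OC ht
  have hmono := mdeg_mono hle
  match hdm : mdeg t' with
  | 0 => rw [mdeg_eq_zero hdm]; exact mem_OC.mpr (Or.inl rfl)
  | 1 =>
    obtain ⟨u, rfl⟩ := mdeg_eq_one hdm
    have hu : 1 ≤ t u := by
      have := hle u
      simpa using this
    rcases mem_OC.mp ht with rfl | ⟨c, hc, rfl⟩ | ⟨c, hc, d, hd, rfl⟩
    · simp at hu
    · have : u = c := by
        by_contra hne
        rw [Finsupp.single_apply, if_neg (fun hh => hne hh.symm)] at hu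
        omega
      subst this
      exact mem_OC.mpr (Or.inr (Or.inl ⟨u, hc, rfl⟩))
    · have : u = c ∨ u = d := by
        by_contra hne
        push_neg at hne
        rw [Finsupp.add_apply, Finsupp.single_apply, Finsupp.single_apply,
          if_neg (fun hh => hne.1 hh.symm), if_neg (fun hh => hne.2 hh.symm)] at hu
        omega
      rcases this with rfl | rfl
      · exact mem_OC.mpr (Or.inr (Or.inl ⟨u, hc, rfl⟩))
      · exact mem_OC.mpr (Or.inr (Or.inl ⟨u, hd, rfl⟩))
  | 2 =>
    have ht2 : mdeg t ≤ 2 := h2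
    have : t' = t := eq_of_le_of_mdeg_le hle (by omega)
    rw [this]; exact ht
  | (d + 3) => omega

variable (K) in
lemma Lspan_le_I (hkn : k ≤ n) :
    Lspan K n k ≤ Submodule.restrictScalars K (Ideal.span (Fnk K n k)) := by
  rw [Lspan, Submodule.span_le]
  rintro x ⟨j, rfl⟩
  rw [SetLike.mem_coe, Submodule.restrictScalars_mem]
  exact Ideal.subset_span (Or.inl ⟨j, rfl⟩)

variable (K) in
lemma Cspan_le_W {C : Finset (Fin n)} :
    Cspan K C ≤ monSpan K ((OC n C : Finset (Fin n →₀ ℕ)) : Set (Fin n →₀ ℕ)) := by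
  rw [Cspan, Submodule.span_le]
  rintro x ⟨c, rfl⟩
  refine Submodule.subset_span ⟨Finsupp.single (c : Fin n) 1, ?_, rfl⟩
  rw [Finset.mem_coe]
  exact mem_OC.mpr (Or.inr (Or.inl ⟨c, c.2, rfl⟩))

lemma pairmon_mem_W {C : Finset (Fin n)} {c d : Fin n} (hc : c ∈ C) (hd : d ∈ C) :
    monomial (Finsupp.single c 1 + Finsupp.single d 1) (1 : K)
      ∈ monSpan K ((OC n C : Finset (Fin n →₀ ℕ)) : Set (Fin n →₀ ℕ)) := by
  refine Submodule.subset_span ⟨_, ?_, rfl⟩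
  rw [Finset.mem_coe]
  exact mem_OC.mpr (Or.inr (Or.inr ⟨c, hc, d, hd, rfl⟩))

lemma one_mem_W {C : Finset (Fin n)} :
    (1 : MvPolynomial (Fin n) K) ∈ monSpan K ((OC n C : Finset (Fin n →₀ ℕ)) : Set (Fin n →₀ ℕ)) := by
  have h0 : monomial (0 : Fin n →₀ ℕ) (1 : K) = 1 := by
    rw [monomial_zero']; exact C_1
  rw [← h0]
  refine Submodule.subset_span ⟨0, ?_, rfl⟩
  rw [Finset.mem_coe]
  exact mem_OC.mpr (Or.inl rfl)

end OrderIdeals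

section Compl

variable {K : Type*} [Field K] [CharZero K] {n k : ℕ}

lemma OC_codisjoint (hkn : k ≤ n) {C : Finset (Fin n)} (hC : C.card = k) :
    Codisjoint (Submodule.restrictScalars K (Ideal.span (Fnk K n k)))
      (monSpan K ((OC n C : Finset (Fin n →₀ ℕ)) : Set (Fin n →₀ ℕ))) := by
  set I := Submodule.restrictScalars K (Ideal.span (Fnk K n k)) with hI
  set W := monSpan K ((OC n C : Finset (Fin n →₀ ℕ)) : Set (Fin n →₀ ℕ)) with hW
  rw [codisjoint_iff, eq_top_iff]
  intro p _
  have hmono : ∀ m : Fin n →₀ ℕ, monomial m (1 : K) ∈ I ⊔ W := by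
    intro m
    rcases le_or_gt 3 (mdeg m) with h3 | h3
    · obtain ⟨a, b, rfl, ha⟩ := exists_split h3
      have hmul : monomial (a + b) (1 : K) = monomial a 1 * monomial b 1 := by
        rw [monomial_mul, one_mul]
      rw [hmul]
      refine Submodule.mem_sup_left ?_
      rw [hI, Submodule.restrictScalars_mem]
      exact Ideal.mul_mem_right _ _ (Ideal.subset_span (Or.inr ⟨a, ha, rfl⟩))
    · have hsup : ∀ i : Fin n, X i ∈ I ⊔ W := by
        intro i
        have := X_mem_sup hkn hC (K := K) i
        exact (sup_le_sup (Lspan_le_I K hkn) (Cspan_le_W K)) this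
      match hdm : mdeg m with
      | 0 =>
        rw [mdeg_eq_zero hdm]
        have h0 : monomial (0 : Fin n →₀ ℕ) (1 : K) = 1 := by
          rw [monomial_zero']; exact C_1
        rw [h0]
        exact Submodule.mem_sup_right one_mem_W
      | 1 =>
        obtain ⟨u, rfl⟩ := mdeg_eq_one hdm
        exact hsup u
      | 2 =>
        obtain ⟨u, v, rfl⟩ := mdeg_eq_two hdm
        rw [← X_mul_X]
        obtain ⟨pu, hpu, qu, hqu, hXu⟩ := Submodule.mem_sup.mp (X_mem_sup hkn hC (K := K) u)
        obtain ⟨pv, hpv, qv, hqv, hXv⟩ := Submodule.mem_sup.mp (X_mem_sup hkn hC (K := K) v)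
        have hexp : (X u : MvPolynomial (Fin n) K) * X v
            = (pu * X v + qu * pv) + qu * qv := by
          rw [← hXu, ← hXv]; ring
        rw [hexp]
        refine Submodule.add_mem _ (Submodule.mem_sup_left ?_) (Submodule.mem_sup_right ?_)
        · rw [hI, Submodule.restrictScalars_mem]
          have h1 : pu * X v ∈ Ideal.span (Fnk K n k) :=
            Ideal.mul_mem_right _ _ (by
              have := Lspan_le_I K hkn hpu
              rwa [Submodule.restrictScalars_mem] at this)
          have h2 : qu * pv ∈ Ideal.span (Fnk K n k) :=
            Ideal.mul_mem_left _ _ (by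
              have := Lspan_le_I K hkn hpv
              rwa [Submodule.restrictScalars_mem] at this)
          exact Ideal.add_mem _ h1 h2
        · have hCC : Cspan K C * Cspan K C ≤ W := by
            rw [Cspan, Submodule.span_mul_span, Submodule.span_le]
            rintro x hx
            obtain ⟨y, hy, z, hz, rfl⟩ := Set.mem_mul.mp hx
            obtain ⟨c, rfl⟩ := hy
            obtain ⟨d, rfl⟩ := hz
            rw [SetLike.mem_coe, X_mul_X]
            exact pairmon_mem_W c.2 d.2
          exact hCC (Submodule.mul_mem_mul hqu hqv)
      | (d + 3) => omega
  rw [← support_sum_monomial_coeff p]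
  refine Submodule.sum_mem _ fun m _ => ?_
  have hsm : monomial m (coeff m p) = coeff m p • monomial m (1 : K) := by
    rw [smul_monomial, smul_eq_mul, mul_one]
  rw [hsm]
  exact Submodule.smul_mem _ _ (hmono m)

lemma OC_disjoint (hkn : k ≤ n) {C : Finset (Fin n)} (hC : C.card = k) :
    Disjoint (Submodule.restrictScalars K (Ideal.span (Fnk K n k)))
      (monSpan K ((OC n C : Finset (Fin n →₀ ℕ)) : Set (Fin n →₀ ℕ))) := by
  rw [Submodule.disjoint_def]
  intro w hwI hwW
  have hsup : ∀ i : Fin n, X i ∈ Lspan K n k ⊔ Cspan K C := X_mem_sup hkn hC (K := K)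
  have hdec : ∀ i : Fin n, ∃ l ∈ Lspan K n k, ∃ qq ∈ Cspan K C,
      l + qq = (X i : MvPolynomial (Fin n) K) :=
    fun i => Submodule.mem_sup.mp (hsup i)
  choose l hl q hq hXeq using hdec
  have hqsub : ∀ i, q i = X i - l i := by
    intro i
    rw [← hXeq i]; ring
  have hqC : ∀ c : Fin n, c ∈ C → q c = X c := by
    intro c hc
    have hmem1 : q c - X c ∈ Lspan K n k := by
      rw [hqsub c]
      have : (X c : MvPolynomial (Fin n) K) - l c - X c = -(l c) := by ring
      rw [this]
      exact neg_mem (hl c)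
    have hmem2 : q c - X c ∈ Cspan K C :=
      sub_mem (hq c) (Submodule.subset_span ⟨⟨c, hc⟩, rfl⟩)
    have h0 : q c - X c = 0 := Submodule.disjoint_def.mp (disj_LC hkn hC) _ hmem1 hmem2
    exact sub_eq_zero.mp h0
  have hqspanX : ∀ i, q i ∈ spanX K n := fun i => Cspan_le_spanX (hq i)
  have hψv : ∀ j : Fin (n - k), aeval q (vlin K n ((j : ℕ) + 1)) = 0 := by
    intro j
    have hvL : vlin K n ((j : ℕ) + 1) ∈ Lspan K n k := Submodule.subset_span ⟨j, rfl⟩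
    have hcalc : aeval q (vlin K n ((j : ℕ) + 1))
        = ∑ i : Fin n, MvPolynomial.C ((((i : ℕ) + 1) ^ ((j : ℕ) + 1) : ℕ) : K) * q i := by
      rw [vlin, map_sum]
      refine Finset.sum_congr rfl fun i _ => ?_
      rw [_root_.map_mul, aeval_X, aeval_C, algebraMap_eq]
    have hCm : ∑ i : Fin n, MvPolynomial.C ((((i : ℕ) + 1) ^ ((j : ℕ) + 1) : ℕ) : K) * q i ∈ Cspan K C := by
      refine Submodule.sum_mem _ fun i _ => ?_
      rw [← smul_eq_C_mul]
      exact Submodule.smul_mem _ _ (hq i)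
    have hLm : ∑ i : Fin n, MvPolynomial.C ((((i : ℕ) + 1) ^ ((j : ℕ) + 1) : ℕ) : K) * q i ∈ Lspan K n k := by
      have hsplit : ∑ i : Fin n, MvPolynomial.C ((((i : ℕ) + 1) ^ ((j : ℕ) + 1) : ℕ) : K) * q i
          = vlin K n ((j : ℕ) + 1)
            - ∑ i : Fin n, MvPolynomial.C ((((i : ℕ) + 1) ^ ((j : ℕ) + 1) : ℕ) : K) * l i := by
        rw [vlin, ← Finset.sum_sub_distrib]
        refine Finset.sum_congr rfl fun i _ => ?_
        rw [hqsub i]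
        ring
      rw [hsplit]
      refine sub_mem hvL (Submodule.sum_mem _ fun i _ => ?_)
      rw [← smul_eq_C_mul]
      exact Submodule.smul_mem _ _ (hl i)
    rw [hcalc]
    exact Submodule.disjoint_def.mp (disj_LC hkn hC) _ hLm hCm
  have hψgen : ∀ f ∈ Fnk K n k, aeval q f ∈ Jcub K n := by
    rintro f (⟨j, rfl⟩ | ⟨m, hm3, rfl⟩)
    · rw [hψv j]
      exact Submodule.zero_mem _
    · rw [Set.mem_setOf_eq] at hm3
      obtain ⟨u, v, w3, rfl⟩ := mdeg_eq_three hm3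
      have hsplit : monomial (Finsupp.single u 1 + (Finsupp.single v 1 + Finsupp.single w3 1))
          (1 : K) = X u * X v * X w3 := by
        rw [X_mul_X, show (X w3 : MvPolynomial (Fin n) K)
          = monomial (Finsupp.single w3 1) 1 from rfl, monomial_mul, one_mul, add_assoc]
      dsimp only
      rw [hsplit, _root_.map_mul, _root_.map_mul, aeval_X, aeval_X, aeval_X]
      exact cube_mem_Jcub (hqspanX u) (hqspanX v) (hqspanX w3)
  have hψI : aeval q w ∈ Jcub K n := by
    have hwI' : w ∈ Ideal.span (Fnk K n k) := by
      rwa [Submodule.restrictScalars_mem] at hwI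
    have h1 : aeval q w ∈ Ideal.map (aeval q (R := K))
        (Ideal.span (Fnk K n k)) := Ideal.mem_map_of_mem _ hwI'
    rw [Ideal.map_span] at h1
    refine Ideal.span_le.mpr ?_ h1
    rintro y ⟨f, hf, rfl⟩
    exact hψgen f hf
  have hfix : aeval q w = w := by
    refine Submodule.span_induction ?_ ?_ ?_ ?_ hwW
    · rintro x ⟨m, hm, rfl⟩
      rw [Finset.mem_coe] at hm
      dsimp only
      rcases mem_OC.mp hm with rfl | ⟨c, hc, rfl⟩ | ⟨c, hc, d, hd, rfl⟩
      · have h0 : monomial (0 : Fin n →₀ ℕ) (1 : K) = 1 := by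
          rw [monomial_zero']; exact C_1
        rw [h0, _root_.map_one]
      · rw [show monomial (Finsupp.single c 1) (1 : K) = X c from rfl, aeval_X, hqC c hc]
      · rw [← X_mul_X, _root_.map_mul, aeval_X, aeval_X, hqC c hc, hqC d hd]
    · rw [_root_.map_zero]
    · intro x y hx hy ihx ihy
      rw [_root_.map_add, ihx, ihy]
    · intro a x hx ihx
      rw [_root_.map_smul, ihx]
  have hsupp : ∀ m, coeff m w ≠ 0 → mdeg m ≤ 2 := by
    refine Submodule.span_induction ?_ ?_ ?_ ?_ hwW
    · rintro x ⟨m0, hm0, rfl⟩ m hm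
      rw [Finset.mem_coe] at hm0
      dsimp only at hm
      rw [coeff_monomial] at hm
      by_cases hc : m0 = m
      · rw [← hc]
        exact mdeg_le_two_of_mem_OC hm0
      · rw [if_neg hc] at hm
        exact absurd rfl hm
    · intro m hm
      rw [coeff_zero] at hm
      exact absurd rfl hm
    · intro x y hx hy ihx ihy m hm
      rw [coeff_add] at hm
      by_cases h1 : coeff m x = 0
      · exact ihy m (by intro h2; rw [h1, h2] at hm; simp at hm)
      · exact ihx m h1
    · intro a x hx ihx m hm
      rw [coeff_smul] at hm
      exact ihx m fun h2 => hm (by rw [h2, smul_zero])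
  have hwJ : w ∈ Jcub K n := hfix ▸ hψI
  ext m
  rw [coeff_zero]
  by_contra hm
  exact hm (coeff_eq_zero_of_mem_Jcub hwJ (hsupp m hm))


end Compl

section Score

variable {K : Type*} [Field K] [CharZero K] {n k : ℕ}

variable (n) in
noncomputable def pairFun (T : Finset (Fin n)) : Sym2 {x // x ∈ T} → (Fin n →₀ ℕ) :=
  Sym2.lift ⟨fun u v => Finsupp.single (u : Fin n) 1 + Finsupp.single (v : Fin n) 1,
    fun _ _ => add_comm _ _⟩

lemma pairFun_mk {T : Finset (Fin n)} (u v : {x // x ∈ T}) :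
    pairFun n T s(u, v) = Finsupp.single (u : Fin n) 1 + Finsupp.single (v : Fin n) 1 := rfl

lemma pairFun_injective (T : Finset (Fin n)) : Function.Injective (pairFun n T) := by
  intro p q
  refine Sym2.inductionOn₂ p q ?_
  intro u v u' v' h
  rw [pairFun_mk, pairFun_mk] at h
  rw [Sym2.eq_iff]
  rcases pair_eq h with ⟨h1, h2⟩ | ⟨h1, h2⟩
  · exact Or.inl ⟨Subtype.ext h1, Subtype.ext h2⟩
  · exact Or.inr ⟨Subtype.ext h1, Subtype.ext h2⟩

lemma ncard_range_pairFun (T : Finset (Fin n)) :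
    (Set.range (pairFun n T)).ncard = (T.card + 1).choose 2 := by
  rw [← Set.image_univ, Set.ncard_image_of_injective _ (pairFun_injective T),
    Set.ncard_univ, Nat.card_eq_fintype_card, Sym2.card, Fintype.card_coe]

lemma tri_eq : (k + 1).choose 2 = k * (k + 1) / 2 := by
  rw [Nat.choose_two_right, Nat.add_sub_cancel, Nat.mul_comm]

lemma tri_lt {a b : ℕ} (h : a < b) : (a + 1).choose 2 < (b + 1).choose 2 := by
  have h1 : (a + 1).choose 2 ≤ b.choose 2 := Nat.choose_le_choose 2 (by omega)
  have h2 : (b + 1).choose 2 = b.choose 1 + b.choose 2 := Nat.choose_succ_succ b 1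
  rw [Nat.choose_one_right] at h2
  omega

lemma scoreSet_subset (Γ : SimpleGraph (Fin n)) {O : Finset (Fin n →₀ ℕ)}
    (hO : IsOrderIdeal O) :
    {m : Fin n →₀ ℕ | m ∈ O ∧ mdeg m = 2 ∧
        ∃ u v : Fin n, m = Finsupp.single u 1 + Finsupp.single v 1 ∧ (Γ.Adj u v ∨ u = v)}
      ⊆ Set.range (pairFun n (Finset.univ.filter fun u => Finsupp.single u 1 ∈ O)) := by
  rintro m ⟨hmO, hm2, u, v, rfl, -⟩
  have hu : Finsupp.single u 1 ∈ O := hO _ hmO _ le_self_add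
  have hv : Finsupp.single v 1 ∈ O := hO _ hmO _ le_add_self
  exact ⟨s(⟨u, by simp [hu]⟩, ⟨v, by simp [hv]⟩), rfl⟩

lemma scoreSet_OC (Γ : SimpleGraph (Fin n)) {C : Finset (Fin n)}
    (hCl : Γ.IsClique (C : Set (Fin n))) :
    {m : Fin n →₀ ℕ | m ∈ OC n C ∧ mdeg m = 2 ∧
        ∃ u v : Fin n, m = Finsupp.single u 1 + Finsupp.single v 1 ∧ (Γ.Adj u v ∨ u = v)}
      = Set.range (pairFun n C) := by
  ext m
  constructor
  · rintro ⟨hmO, hm2, -⟩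
    rcases mem_OC.mp hmO with rfl | ⟨c, hc, rfl⟩ | ⟨c, hc, d, hd, rfl⟩
    · simp at hm2
    · rw [mdeg_single] at hm2; omega
    · exact ⟨s(⟨c, hc⟩, ⟨d, hd⟩), rfl⟩
  · rintro ⟨p, rfl⟩
    refine Sym2.inductionOn p ?_
    intro u v
    rw [pairFun_mk]
    refine ⟨mem_OC.mpr (Or.inr (Or.inr ⟨u.1, u.2, v.1, v.2, rfl⟩)), ?_, u.1, v.1, rfl, ?_⟩
    · rw [mdeg_add, mdeg_single, mdeg_single]
    · rcases eq_or_ne (u : Fin n) (v : Fin n) with heq | hne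
      · exact Or.inr heq
      · exact Or.inl (hCl (Finset.mem_coe.mpr u.2) (Finset.mem_coe.mpr v.2) hne)

lemma card_single_le {O : Finset (Fin n →₀ ℕ)} (hkn : k ≤ n)
    (hdisj : Disjoint (Submodule.restrictScalars K (Ideal.span (Fnk K n k)))
      (monSpan K (O : Set (Fin n →₀ ℕ)))) :
    (Finset.univ.filter fun u : Fin n => Finsupp.single u 1 ∈ O).card ≤ k := by
  set S := Finset.univ.filter fun u : Fin n => Finsupp.single u 1 ∈ O with hS
  have hXW : Cspan K S ≤ monSpan K (O : Set (Fin n →₀ ℕ)) := by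
    rw [Cspan, Submodule.span_le]
    rintro x ⟨c, rfl⟩
    refine Submodule.subset_span ⟨Finsupp.single (c : Fin n) 1, ?_, rfl⟩
    have hc : (c : Fin n) ∈ Finset.univ.filter fun u : Fin n => Finsupp.single u 1 ∈ O := c.2
    rw [Finset.mem_filter] at hc
    exact Finset.mem_coe.mpr hc.2
  have hd : Disjoint (Lspan K n k) (Cspan K S) :=
    hdisj.mono (Lspan_le_I K hkn) hXW
  have hcomb : LinearIndependent K (comb K n k S) :=
    (vI_indep hkn).sum_type (XT_indep S) hd
  have hphi : LinearIndependent K (⇑(phi K) ∘ comb K n k S) :=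
    hcomb.map (Disjoint.mono_left (comb_le_spanX S) disj_spanX_ker)
  have hcard := hphi.fintype_card_le_finrank
  rw [Module.finrank_fintype_fun_eq_card, Fintype.card_fin] at hcard
  rw [Fintype.card_sum, Fintype.card_fin, Fintype.card_coe] at hcard
  omega

end Score

end BB

open BB

/-- `Γ` has a clique of size `k` iff some order ideal supporting
a border basis of `⟨F_{n,k}⟩` has score `k(k+1)/2`; moreover, when `Γ` has a
`k`-clique, `k(k+1)/2` is the maximum score of such order ideals. -/
theorem clique_iff_orderIdeal_score {K : Type*} [Field K] [CharZero K] (n k : ℕ)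
    (hk1 : 1 ≤ k) (hkn : k ≤ n) (Γ : SimpleGraph (Fin n)) :
    ((∃ C : Finset (Fin n), Γ.IsNClique k C) ↔
      ∃ O : Finset (Fin n →₀ ℕ), IsOrderIdeal O ∧
        IsCompl (Submodule.restrictScalars K (Ideal.span (Fnk K n k)))
          (monSpan K (O : Set (Fin n →₀ ℕ))) ∧
        score Γ O = k * (k + 1) / 2) ∧
    ((∃ C : Finset (Fin n), Γ.IsNClique k C) →
      ∀ O : Finset (Fin n →₀ ℕ), IsOrderIdeal O →
        IsCompl (Submodule.restrictScalars K (Ideal.span (Fnk K n k)))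
          (monSpan K (O : Set (Fin n →₀ ℕ))) →
        score Γ O ≤ k * (k + 1) / 2) := by
  have hmax : ∀ O : Finset (Fin n →₀ ℕ), IsOrderIdeal O →
      IsCompl (Submodule.restrictScalars K (Ideal.span (Fnk K n k)))
        (monSpan K (O : Set (Fin n →₀ ℕ))) →
      score Γ O ≤ k * (k + 1) / 2 := by
    intro O hOI hcompl
    have hsub := scoreSet_subset Γ hOI
    have hfin : (Set.range (pairFun n
        (Finset.univ.filter fun u : Fin n => Finsupp.single u 1 ∈ O))).Finite :=
      Set.finite_range _
    have h1 : score Γ O ≤ (Set.range (pairFun n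
        (Finset.univ.filter fun u : Fin n => Finsupp.single u 1 ∈ O))).ncard :=
      Set.ncard_le_ncard hsub hfin
    rw [ncard_range_pairFun] at h1
    have h2 := card_single_le (K := K) hkn hcompl.disjoint
    have h3 : ((Finset.univ.filter fun u : Fin n => Finsupp.single u 1 ∈ O).card + 1).choose 2
        ≤ (k + 1).choose 2 := Nat.choose_le_choose 2 (by omega)
    have h4 : (k + 1).choose 2 = k * (k + 1) / 2 := tri_eq
    omega
  refine ⟨⟨?_, ?_⟩, fun _ => hmax⟩
  · rintro ⟨C, hC⟩
    refine ⟨OC n C, OC_isOrderIdeal,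
      ⟨OC_disjoint hkn hC.card_eq, OC_codisjoint hkn hC.card_eq⟩, ?_⟩
    show Set.ncard _ = _
    rw [scoreSet_OC Γ hC.isClique, ncard_range_pairFun, hC.card_eq, tri_eq]
  · rintro ⟨O, hOI, hcompl, hsc⟩
    have hSk : (Finset.univ.filter fun u : Fin n => Finsupp.single u 1 ∈ O).card ≤ k :=
      card_single_le (K := K) hkn hcompl.disjoint
    have hsub := scoreSet_subset Γ hOI
    have hfin : (Set.range (pairFun n
        (Finset.univ.filter fun u : Fin n => Finsupp.single u 1 ∈ O))).Finite :=
      Set.finite_range _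
    have hscn : Set.ncard {m : Fin n →₀ ℕ | m ∈ O ∧ mdeg m = 2 ∧
        ∃ u v : Fin n, m = Finsupp.single u 1 + Finsupp.single v 1 ∧ (Γ.Adj u v ∨ u = v)}
        = k * (k + 1) / 2 := hsc
    have hle1 : k * (k + 1) / 2 ≤ (Set.range (pairFun n
        (Finset.univ.filter fun u : Fin n => Finsupp.single u 1 ∈ O))).ncard := by
      rw [← hscn]
      exact Set.ncard_le_ncard hsub hfin
    have hrange := ncard_range_pairFun (n := n)
      (Finset.univ.filter fun u : Fin n => Finsupp.single u 1 ∈ O)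
    have hSeqk : (Finset.univ.filter fun u : Fin n => Finsupp.single u 1 ∈ O).card = k := by
      rcases lt_or_eq_of_le hSk with hlt | heq
      · exfalso
        have hstrict := tri_lt hlt
        have h4 : (k + 1).choose 2 = k * (k + 1) / 2 := tri_eq
        omega
      · exact heq
    have hseteq : {m : Fin n →₀ ℕ | m ∈ O ∧ mdeg m = 2 ∧
        ∃ u v : Fin n, m = Finsupp.single u 1 + Finsupp.single v 1 ∧ (Γ.Adj u v ∨ u = v)}
        = Set.range (pairFun n (Finset.univ.filter fun u : Fin n => Finsupp.single u 1 ∈ O)) := by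
      refine Set.eq_of_subset_of_ncard_le hsub ?_ hfin
      rw [hrange, hSeqk, hscn]
      have h4 : (k + 1).choose 2 = k * (k + 1) / 2 := tri_eq
      omega
    refine ⟨Finset.univ.filter fun u : Fin n => Finsupp.single u 1 ∈ O, ?_, hSeqk⟩
    intro u hu v hv huv
    have hm : (Finsupp.single u 1 + Finsupp.single v 1 : Fin n →₀ ℕ) ∈ Set.range (pairFun n
        (Finset.univ.filter fun u : Fin n => Finsupp.single u 1 ∈ O)) :=
      ⟨s(⟨u, Finset.mem_coe.mp hu⟩, ⟨v, Finset.mem_coe.mp hv⟩), rfl⟩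
    rw [← hseteq] at hm
    obtain ⟨-, -, u', v', heq, hadj⟩ := hm
    rcases pair_eq heq with ⟨h1, h2⟩ | ⟨h1, h2⟩
    · rcases hadj with hA | hE
      · rw [h1, h2]; exact hA
      · exact absurd (h1.trans (hE.trans h2.symm)) huv
    · rcases hadj with hA | hE
      · rw [h1, h2]; exact hA.symm
      · exact absurd ((h1.trans hE.symm).trans h2.symm) huv
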